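/- Let a : [0,∞) → ℝ and b : [0,∞) → ℝ be continuous, and suppose: (i) ∫₀^t a(s) ds → +∞ as t → +∞; (ii) there exist K_L > 0 and α ∈ (0,1) such that K_L ∫₀^t exp(-∫_s^t a(u)du) |b(s)| ds ≤ α for all t ≥ 0. Let x : [0,∞) → ℝ be continuous with |x(t)| ≤ L for all t and x(t) → 0 as t → ∞. Then ∫₀^t exp(-∫_s^t a(u)du) b(s) F(x(s)) ds → 0 as t → ∞, for any continuous F : ℝ → ℝ with F(0) = 0 and |F(u)-F(v)| ≤ K_L |u-v| for |u|,|v| ≤ L. -/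

import Mathlib

open Real Filter Set intervalIntegral

/-- Key convergence lemma in the stability proof. -/
theorem stmt_9 (a b x F : ℝ → ℝ) (L K_L α : ℝ)
    (ha : ContinuousOn a (Set.Ici 0)) (hb : ContinuousOn b (Set.Ici 0))
    (hL : 0 < L) (hKL : 0 < K_L) (hα0 : 0 < α) (hα1 : α < 1)
    (hH3 : Filter.Tendsto (fun t => ∫ s in (0:ℝ)..t, a s) Filter.atTop Filter.atTop)
    (hH5 : ∀ t ≥ (0:ℝ),
      K_L * ∫ s in (0:ℝ)..t, Real.exp (-∫ u in s..t, a u) * |b s| ≤ α)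
    (hx : ContinuousOn x (Set.Ici 0)) (hxL : ∀ t ≥ (0:ℝ), |x t| ≤ L)
    (hx0 : Filter.Tendsto x Filter.atTop (nhds 0))
    (hF : Continuous F) (hF0 : F 0 = 0)
    (hFlip : ∀ u v : ℝ, |u| ≤ L → |v| ≤ L → |F u - F v| ≤ K_L * |u - v|) :
    Filter.Tendsto
      (fun t => ∫ s in (0:ℝ)..t, Real.exp (-∫ u in s..t, a u) * (b s * F (x s)))
      Filter.atTop (nhds 0) := by
  have hmaxmem : ∀ s : ℝ, max s 0 ∈ Set.Ici (0:ℝ) := fun s => le_max_right s 0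
  have hmaxc : Continuous (fun s : ℝ => max s 0) := continuous_id.max continuous_const
  set aa : ℝ → ℝ := fun s => a (max s 0) with haa_def
  set bb : ℝ → ℝ := fun s => b (max s 0) with hbb_def
  set xx : ℝ → ℝ := fun s => x (max s 0) with hxx_def
  have hca : Continuous aa := ha.comp_continuous hmaxc hmaxmem
  have hcb : Continuous bb := hb.comp_continuous hmaxc hmaxmem
  have hcx : Continuous xx := hx.comp_continuous hmaxc hmaxmem
  set A : ℝ → ℝ := fun t => ∫ s in (0:ℝ)..t, aa s with hA_def
  have hAc : Continuous A :=
    intervalIntegral.continuous_primitive (fun u v => hca.intervalIntegrable u v) 0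
  -- the interval integrals of `a` are differences of the primitive `A`
  have key : ∀ s t : ℝ, 0 ≤ s → 0 ≤ t → (∫ u in s..t, a u) = A t - A s := by
    intro s t hs ht
    have h1 : (∫ u in s..t, a u) = ∫ u in s..t, aa u := by
      apply intervalIntegral.integral_congr
      intro u hu
      have : (0:ℝ) ≤ u := le_trans (le_min hs ht) (Set.mem_uIcc.mp hu |>.elim
        (fun h => le_trans (min_le_left s t) h.1) (fun h => le_trans (min_le_right s t) h.1))
      simp [haa_def, max_eq_left this]
    rw [h1]
    rw [← intervalIntegral.integral_interval_sub_left (hca.intervalIntegrable 0 t)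
      (hca.intervalIntegrable 0 s)]
  have hA0 : A 0 = 0 := intervalIntegral.integral_same
  have hAtop : Tendsto A atTop atTop := by
    apply hH3.congr'
    filter_upwards [eventually_ge_atTop (0:ℝ)] with t ht
    rw [key 0 t le_rfl ht, hA0, sub_zero]
  -- rewrite H5 in terms of A, bb
  have hH5' : ∀ t : ℝ, 0 ≤ t →
      K_L * ∫ s in (0:ℝ)..t, Real.exp (A s - A t) * |bb s| ≤ α := by
    intro t ht
    have h1 : (∫ s in (0:ℝ)..t, Real.exp (A s - A t) * |bb s|)
        = ∫ s in (0:ℝ)..t, Real.exp (-∫ u in s..t, a u) * |b s| := by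
      apply intervalIntegral.integral_congr
      intro s hs
      have hs0 : (0:ℝ) ≤ s := by
        rcases Set.mem_uIcc.mp hs with h | h
        · exact h.1
        · exact le_trans ht h.1
      dsimp only
      rw [key s t hs0 ht]
      simp [hbb_def, max_eq_left hs0, neg_sub]
    rw [h1]; exact hH5 t ht
  have hxxL : ∀ s : ℝ, |xx s| ≤ L := fun s => hxL _ (hmaxmem s)
  -- main argument
  rw [NormedAddCommGroup.tendsto_nhds_zero]
  intro ε hε
  have hη : (0:ℝ) < ε / (2 * α) := by positivity
  obtain ⟨T₀, hT₀⟩ := (Metric.tendsto_atTop.mp hx0) (ε / (2 * α)) hη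
  set T : ℝ := max T₀ 0 with hT_def
  have hT0 : (0:ℝ) ≤ T := le_max_right _ _
  set C : ℝ := ∫ s in (0:ℝ)..T, Real.exp (A s) * |bb s * F (xx s)| with hC_def
  have hC0 : 0 ≤ C := by
    apply intervalIntegral.integral_nonneg hT0
    intro u _; positivity
  have hfront : Tendsto (fun t => Real.exp (-A t) * C) atTop (nhds 0) := by
    have := (Real.tendsto_exp_neg_atTop_nhds_zero.comp hAtop).mul_const C
    simpa using this
  have hfront' : ∀ᶠ t in atTop, Real.exp (-A t) * C < ε / 2 := by
    have := hfront.eventually (gt_mem_nhds (by positivity : (0:ℝ) < ε / 2))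
    exact this
  filter_upwards [hfront', eventually_ge_atTop T] with t hfr hTt
  have ht0 : (0:ℝ) ≤ t := le_trans hT0 hTt
  -- rewrite the integral
  set g : ℝ → ℝ := fun s => Real.exp (A s - A t) * (bb s * F (xx s)) with hg_def
  have hcg : Continuous g := by
    apply Continuous.mul
    · exact Real.continuous_exp.comp ((hAc).sub continuous_const)
    · exact hcb.mul (hF.comp hcx)
  have hIeq : (∫ s in (0:ℝ)..t, Real.exp (-∫ u in s..t, a u) * (b s * F (x s)))
      = ∫ s in (0:ℝ)..t, g s := by
    apply intervalIntegral.integral_congr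
    intro s hs
    have hs0 : (0:ℝ) ≤ s := by
      rcases Set.mem_uIcc.mp hs with h | h
      · exact h.1
      · exact le_trans ht0 h.1
    dsimp only
    rw [key s t hs0 ht0]
    simp [hg_def, hbb_def, hxx_def, max_eq_left hs0, neg_sub]
  rw [hIeq]
  -- split the integral
  have hsplit : (∫ s in (0:ℝ)..t, g s) = (∫ s in (0:ℝ)..T, g s) + ∫ s in T..t, g s :=
    (intervalIntegral.integral_add_adjacent_intervals (hcg.intervalIntegrable 0 T)
      (hcg.intervalIntegrable T t)).symm
  rw [hsplit]
  have hnorm1 : ‖∫ s in (0:ℝ)..T, g s‖ ≤ Real.exp (-A t) * C := by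
    calc ‖∫ s in (0:ℝ)..T, g s‖ ≤ ∫ s in (0:ℝ)..T, ‖g s‖ :=
          intervalIntegral.norm_integral_le_integral_norm hT0
      _ = ∫ s in (0:ℝ)..T, Real.exp (-A t) * (Real.exp (A s) * |bb s * F (xx s)|) := by
          apply intervalIntegral.integral_congr
          intro s _
          dsimp only
          rw [Real.norm_eq_abs, hg_def]
          dsimp only
          rw [abs_mul, abs_of_pos (Real.exp_pos _), sub_eq_add_neg, Real.exp_add]
          ring
      _ = Real.exp (-A t) * C := by
          rw [hC_def, intervalIntegral.integral_const_mul]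
  have hnorm2 : ‖∫ s in T..t, g s‖ ≤ ε / 2 := by
    have hbound : ∀ s ∈ Set.Icc T t,
        ‖g s‖ ≤ Real.exp (A s - A t) * |bb s| * (K_L * (ε / (2 * α))) := by
      intro s hs
      have hsT₀ : T₀ ≤ s := le_trans (le_max_left _ _) hs.1
      have hs0 : (0:ℝ) ≤ s := le_trans hT0 hs.1
      have hxs : |x s| < ε / (2 * α) := by
        have := hT₀ s hsT₀
        simpa [Real.dist_eq] using this
      have hxxs : xx s = x s := by simp [hxx_def, max_eq_left hs0]
      have hFb : |F (xx s)| ≤ K_L * (ε / (2 * α)) := by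
        have h1 : |F (xx s) - F 0| ≤ K_L * |xx s - 0| :=
          hFlip _ _ (hxxL s) (by simpa using hL.le)
        rw [hF0, sub_zero, sub_zero] at h1
        refine le_trans h1 ?_
        apply mul_le_mul_of_nonneg_left _ hKL.le
        rw [hxxs]; exact hxs.le
      rw [Real.norm_eq_abs, hg_def]
      dsimp only
      rw [abs_mul, abs_of_pos (Real.exp_pos _), abs_mul, mul_assoc]
      apply mul_le_mul_of_nonneg_left _ (Real.exp_pos _).le
      exact mul_le_mul_of_nonneg_left hFb (abs_nonneg _)
    calc ‖∫ s in T..t, g s‖ ≤ ∫ s in T..t, ‖g s‖ :=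
          intervalIntegral.norm_integral_le_integral_norm hTt
      _ ≤ ∫ s in T..t, Real.exp (A s - A t) * |bb s| * (K_L * (ε / (2 * α))) := by
          apply intervalIntegral.integral_mono_on hTt
            (hcg.norm.intervalIntegrable T t)
            ((((Real.continuous_exp.comp (hAc.sub continuous_const)).mul
              hcb.abs).mul continuous_const).intervalIntegrable T t)
          exact hbound
      _ = (∫ s in T..t, Real.exp (A s - A t) * |bb s|) * (K_L * (ε / (2 * α))) :=
          intervalIntegral.integral_mul_const _ _
      _ ≤ (∫ s in (0:ℝ)..t, Real.exp (A s - A t) * |bb s|) * (K_L * (ε / (2 * α))) := by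
          apply mul_le_mul_of_nonneg_right _ (by positivity)
          have hadd : (∫ s in (0:ℝ)..t, Real.exp (A s - A t) * |bb s|)
              = (∫ s in (0:ℝ)..T, Real.exp (A s - A t) * |bb s|)
                + ∫ s in T..t, Real.exp (A s - A t) * |bb s| :=
            (intervalIntegral.integral_add_adjacent_intervals
              (((Real.continuous_exp.comp (hAc.sub continuous_const)).mul
                hcb.abs).intervalIntegrable 0 T)
              (((Real.continuous_exp.comp (hAc.sub continuous_const)).mul
                hcb.abs).intervalIntegrable T t)).symm
          rw [hadd]
          have hpos : 0 ≤ ∫ s in (0:ℝ)..T, Real.exp (A s - A t) * |bb s| := by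
            apply intervalIntegral.integral_nonneg hT0
            intro u _; positivity
          linarith
      _ ≤ ε / 2 := by
          have h5 := hH5' t ht0
          have hX0 : 0 ≤ ∫ s in (0:ℝ)..t, Real.exp (A s - A t) * |bb s| := by
            apply intervalIntegral.integral_nonneg ht0
            intro u _; positivity
          set X := ∫ s in (0:ℝ)..t, Real.exp (A s - A t) * |bb s|
          have : X * (K_L * (ε / (2 * α))) = (K_L * X) * (ε / (2 * α)) := by ring
          rw [this]
          calc (K_L * X) * (ε / (2 * α)) ≤ α * (ε / (2 * α)) :=
                mul_le_mul_of_nonneg_right h5 hη.le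
            _ = ε / 2 := by field_simp
  calc ‖(∫ s in (0:ℝ)..T, g s) + ∫ s in T..t, g s‖
      ≤ ‖∫ s in (0:ℝ)..T, g s‖ + ‖∫ s in T..t, g s‖ := norm_add_le _ _
    _ ≤ Real.exp (-A t) * C + ε / 2 := add_le_add hnorm1 hnorm2
    _ < ε / 2 + ε / 2 := by linarith
    _ = ε := by ring
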